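/- Let γ > 0, let R ≥ 600·(γ^{3/4} + γ^{−3/4}), and let j be an integer with 1 ≤ j ≤ M_R := ⌊(1/(32π))·γR²/log R⌋. If w ∈ F_j satisfies w = G_{j,R}(w), then −γ/2 ≤ Im(w²) ≤ 0; equivalently, γ/2 ≤ Im(w² + iγ) ≤ γ, so that w² + iγ lies in the open upper half-plane. -/

import Mathlib

set_option maxHeartbeats 2000000

/-- The argument in `[-π, π)`: it agrees with the principal argument `Complex.arg`
except on the negative real axis, where it takes the value `-π`. -/
noncomputable def argm (ζ : ℂ) : ℝ :=
  if Complex.arg ζ = Real.pi then -Real.pi else Complex.arg ζ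

/-- The branch `sq₋` of the square root with branch cut along the negative real axis:
`sq₋(ζ) = √|ζ|·exp(i·arg₋(ζ)/2)`. -/
noncomputable def sqm (ζ : ℂ) : ℂ :=
  (Real.sqrt ‖ζ‖ : ℂ) * Complex.exp (Complex.I * (argm ζ) / 2)

/-- The closed sector `F_∞ = {w : Re w ≤ 0 ≤ Im w, |Re w| ≥ 2·Im w}`. -/
def Finf : Set ℂ := {w : ℂ | w.re ≤ 0 ∧ 0 ≤ w.im ∧ 2 * w.im ≤ |w.re|}

/-- `h(w) = (sq₋(w² + iγ) − w)/(sq₋(w² + iγ) + w)`. -/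
noncomputable def hfun (γ : ℝ) (w : ℂ) : ℂ :=
  (sqm (w ^ 2 + Complex.I * γ) - w) / (sqm (w ^ 2 + Complex.I * γ) + w)

/-- `A(w) = log|h(w)|`. -/
noncomputable def Afun (γ : ℝ) (w : ℂ) : ℝ := Real.log ‖hfun γ w‖

/-- `B_j(w) = arg₋(h(w)) + 2πj`. -/
noncomputable def Bfun (γ : ℝ) (j : ℤ) (w : ℂ) : ℝ := argm (hfun γ w) + 2 * Real.pi * j

/-- `G_{j,R}(w) = (−B_j(w) + i·A(w))/(2R)`. -/
noncomputable def Gfun (γ : ℝ) (j : ℤ) (R : ℝ) (w : ℂ) : ℂ :=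
  (-(Bfun γ j w : ℂ) + Complex.I * (Afun γ w : ℂ)) / (2 * (R : ℂ))

/-- `F_j = {w ∈ F_∞ : B_j(w) ≥ 2·|A(w)|}`. -/
noncomputable def Fj (γ : ℝ) (j : ℤ) : Set ℂ :=
  {w ∈ Finf | 2 * |Afun γ w| ≤ Bfun γ j w}

lemma argm_le_pi (ζ : ℂ) : argm ζ ≤ Real.pi := by
  unfold argm
  split
  · linarith [Real.pi_pos]
  · exact Complex.arg_le_pi ζ

lemma sqm_sq (ζ : ℂ) : sqm ζ ^ 2 = ζ := by
  have hexp : Complex.exp (Complex.I * (argm ζ)) = Complex.exp (ζ.arg * Complex.I) := by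
    unfold argm
    by_cases h : ζ.arg = Real.pi
    · rw [if_pos h, h]
      push_cast
      rw [show Complex.I * (-(Real.pi:ℂ)) = -(Real.pi * Complex.I) by ring,
        Complex.exp_neg, Complex.exp_pi_mul_I]
      norm_num
    · rw [if_neg h]; ring_nf
  have h1 : sqm ζ ^ 2 = ((Real.sqrt ‖ζ‖ : ℝ) : ℂ) ^ 2 *
      Complex.exp (Complex.I * (argm ζ)) := by
    unfold sqm
    rw [mul_pow, ← Complex.exp_nat_mul]
    ring_nf
  rw [h1, hexp, ← Complex.ofReal_pow, Real.sq_sqrt (norm_nonneg ζ),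
    Complex.norm_mul_exp_arg_mul_I]


lemma aux_sw (m sA wA γ : ℝ) (h2 : m^2 ≤ (sA + wA)^2) (hs : sA^2 ≤ wA^2 + γ) :
    m^2 ≤ 4*wA^2 + 2*γ := by nlinarith [sq_nonneg (sA - wA)]

lemma aux_sum_ab (X a b : ℝ) (hX : 4096 ≤ X) (ha0 : 0 ≤ a) (h2a : 2*a ≤ b)
    (hb0 : 0 ≤ b) (hb : b ≤ 4 + X/16) : a^2 + b^2 ≤ X^2 - 2*X := by nlinarith

lemma aux_HX (H m W γ R a b X : ℝ) (hγ : 0 < γ) (hR : 0 < R)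
    (hhg : H * γ = m^2) (hsw : m^2 ≤ 4*W + 2*γ) (hW : W * (4*R^2) = a^2 + b^2)
    (hsum : a^2 + b^2 ≤ X^2 - 2*X) (hX : γ * R^2 = X) : H ≤ X := by
  have hX0 : 0 < X := hX ▸ by positivity
  have h1 : H * γ * R^2 ≤ (4*W + 2*γ) * R^2 := by
    rw [hhg]; exact mul_le_mul_of_nonneg_right hsw (by positivity)
  have h2 : H * X ≤ X^2 := by nlinarith
  nlinarith

lemma aux_ab (a b L Q X p : ℝ) (hp0 : 0 < p) (hp4 : p ≤ 4) (hL0 : 0 < L)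
    (ha : a ≤ 4*L) (hb0 : 0 ≤ b) (hbub : b ≤ p + X/(16*L)) (hLQ : L ≤ 3*Q)
    (hQ64 : 64 ≤ Q) (hQ2 : Q^2 = X) : a*b ≤ X := by
  have h3 : (4*L) * (X/(16*L)) = X/4 := by field_simp; ring
  have h1 : a*b ≤ (4*L)*b := mul_le_mul_of_nonneg_right ha hb0
  have h2 : (4*L)*b ≤ (4*L)*(p + X/(16*L)) := mul_le_mul_of_nonneg_left hbub (by linarith)
  have h4 : (4*L)*p ≤ 48*Q := by nlinarith
  nlinarith [hQ64, hQ2]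

lemma aux_lb (x y a b γ R X : ℝ) (hR : 0 < R)
    (hmul : (x*(2*R))*(y*(2*R)) = (-b)*a)
    (hab : a*b ≤ X) (hX : γ*R^2 = X) : -γ/2 ≤ 2*x*y := by
  nlinarith [mul_pos hR hR]

/-- For `R ≥ 600(γ^{3/4} + γ^{−3/4})` and `1 ≤ j ≤ M_R = ⌊γR²/(32π·log R)⌋`, a solution
`w ∈ F_j` of `w = G_{j,R}(w)` satisfies `−γ/2 ≤ Im(w²) ≤ 0`; equivalently
`γ/2 ≤ Im(w² + iγ) ≤ γ`, so `w² + iγ` lies in the open upper half-plane. -/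
theorem fixed_point_imaginary_part_bound
    (γ R : ℝ) (hγ : 0 < γ)
    (hR : 600 * (γ ^ ((3 : ℝ) / 4) + γ ^ (-(3 : ℝ) / 4)) ≤ R)
    (j : ℤ) (hj : 1 ≤ j)
    (hjM : j ≤ ⌊(1 / (32 * Real.pi)) * (γ * R ^ 2 / Real.log R)⌋)
    (w : ℂ) (hw : w ∈ Fj γ j) (hfix : w = Gfun γ j R w) :
    (-γ / 2 ≤ (w ^ 2).im ∧ (w ^ 2).im ≤ 0) ∧
    (γ / 2 ≤ (w ^ 2 + Complex.I * γ).im ∧ (w ^ 2 + Complex.I * γ).im ≤ γ) ∧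
    0 < (w ^ 2 + Complex.I * γ).im := by
  ------------------------------------------------------------------
  -- Part 1: real-variable scaffolding
  ------------------------------------------------------------------
  have hγ34 : (0:ℝ) < γ ^ ((3:ℝ)/4) := Real.rpow_pos_of_pos hγ _
  have hγ34' : (0:ℝ) < γ ^ (-(3:ℝ)/4) := Real.rpow_pos_of_pos hγ _
  have hprod34 : γ ^ ((3:ℝ)/4) * γ ^ (-(3:ℝ)/4) = 1 := by
    rw [← Real.rpow_add hγ]; norm_num
  have hR1200 : 1200 ≤ R := by nlinarith [sq_nonneg (γ ^ ((3:ℝ)/4) - γ ^ (-(3:ℝ)/4))]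
  have hR0 : 0 < R := by linarith
  have e1 : (γ ^ (-(3:ℝ)/4)) ^ (4:ℕ) = (γ ^ 3)⁻¹ := by
    rw [← Real.rpow_natCast (γ ^ (-(3:ℝ)/4)) 4, ← Real.rpow_mul hγ.le]
    norm_num
  have e2 : (γ ^ ((3:ℝ)/4)) ^ (4:ℕ) = γ ^ 3 := by
    rw [← Real.rpow_natCast (γ ^ ((3:ℝ)/4)) 4, ← Real.rpow_mul hγ.le]
    norm_num
  have p1 : (600 * γ ^ (-(3:ℝ)/4)) ^ (4:ℕ) ≤ R ^ 4 :=
    pow_le_pow_left₀ (by positivity) (by linarith) 4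
  have p2 : (600 * γ ^ ((3:ℝ)/4)) ^ (4:ℕ) ≤ R ^ 4 :=
    pow_le_pow_left₀ (by positivity) (by linarith) 4
  rw [mul_pow, e1] at p1
  rw [mul_pow, e2] at p2
  have hg3 : (0:ℝ) < γ ^ 3 := by positivity
  have hg3low : (600:ℝ)^4 ≤ γ^3 * R^4 := by
    have h := mul_le_mul_of_nonneg_right p1 hg3.le
    rw [mul_assoc, inv_mul_cancel₀ hg3.ne', mul_one] at h
    nlinarith
  obtain ⟨X, hXdef⟩ : ∃ x, γ * R ^ 2 = x := ⟨_, rfl⟩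
  rw [hXdef] at hjM
  have hX0 : 0 < X := by rw [← hXdef]; positivity
  have hXc_low : (600:ℝ)^4 * R^2 ≤ X^3 := by
    have : X^3 = γ^3 * R^6 := by rw [← hXdef]; ring
    rw [this]
    nlinarith [sq_nonneg R, hR0]
  have hX4096 : (4096:ℝ) ≤ X := by
    refine le_of_pow_le_pow_left₀ (n := 3) (by norm_num) hX0.le ?_
    nlinarith [hXc_low, hR1200, sq_nonneg R]
  have hXleR4 : X ≤ R^4 := by
    refine le_of_pow_le_pow_left₀ (n := 3) (by norm_num) (by positivity) ?_
    have h1 : X^3 = γ^3 * R^6 := by rw [← hXdef]; ring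
    have h2 : γ^3 * 600^4 * R^6 ≤ R^4 * R^6 := by nlinarith [pow_pos hR0 6]
    have hR1 : (1:ℝ) ≤ R := by linarith
    have h3 : R^4 * R^6 ≤ (R^4)^3 := by
      calc R^4 * R^6 = R^10 := by ring
        _ ≤ R^12 := pow_le_pow_right₀ hR1 (by norm_num)
        _ = (R^4)^3 := by ring
    nlinarith [pow_pos hR0 6, hg3]
  obtain ⟨L, hLdef⟩ : ∃ l, Real.log R = l := ⟨_, rfl⟩
  rw [hLdef] at hjM
  have hL1 : 1 ≤ L := by
    rw [← hLdef, Real.le_log_iff_exp_le hR0]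
    calc Real.exp 1 ≤ 3 := by
          have := Real.exp_one_lt_d9; linarith
      _ ≤ R := by linarith
  obtain ⟨Q, hQdef⟩ : ∃ q, Real.sqrt X = q := ⟨_, rfl⟩
  have hQ : Q ^ 2 = X := by rw [← hQdef]; exact Real.sq_sqrt hX0.le
  have hQ0 : 0 < Q := hQdef ▸ Real.sqrt_pos.mpr hX0
  have hQ64 : (64:ℝ) ≤ Q := by
    rw [← hQdef, show (64:ℝ) = Real.sqrt 4096 by
      rw [show (4096:ℝ) = 64^2 by norm_num, Real.sqrt_sq (by norm_num)]]
    exact Real.sqrt_le_sqrt hX4096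
  have hlogX_ub : Real.log X ≤ 2*Q - 2 := by
    have hlq : Real.log X = 2 * Real.log Q := by
      rw [← hQ, Real.log_pow]
      push_cast
      ring
    rw [hlq]
    nlinarith [Real.log_le_sub_one_of_pos hQ0]
  have hlogX4L : Real.log X ≤ 4*L := by
    calc Real.log X ≤ Real.log (R^4) := Real.log_le_log hX0 hXleR4
      _ = 4*L := by rw [Real.log_pow, ← hLdef]; norm_num
  have hLQ : L ≤ 3*Q := by
    have h1 : R^2 ≤ X^3 := by
      have hh : (1:ℝ)*R^2 ≤ 600^4*R^2 :=
        mul_le_mul_of_nonneg_right (by norm_num) (sq_nonneg R)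
      linarith
    have h2 : Real.log (R^2) ≤ Real.log (X^3) := Real.log_le_log (by positivity) h1
    rw [Real.log_pow, Real.log_pow] at h2
    push_cast at h2
    linarith [hlogX_ub, hQ64, h2, hLdef.ge, hLdef.le]
  have hπ : (0:ℝ) < Real.pi := Real.pi_pos
  have hπ4 : Real.pi ≤ 4 := by linarith [Real.pi_lt_d2]
  have hL0 : (0:ℝ) < L := by linarith
  have hj_ub : 2 * Real.pi * (j:ℝ) ≤ X / (16 * L) := by
    have h1 : (j:ℝ) ≤ (1 / (32 * Real.pi)) * (X / L) := by
      calc (j:ℝ) ≤ (⌊(1 / (32 * Real.pi)) * (X / L)⌋ : ℝ) := by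
            exact_mod_cast hjM
        _ ≤ _ := Int.floor_le _
    have h2 : 2 * Real.pi * ((1 / (32 * Real.pi)) * (X / L)) = X / (16*L) := by
      field_simp; ring
    nlinarith [h1, h2, hπ]
  ------------------------------------------------------------------
  -- Part 2: the square root and the function h
  ------------------------------------------------------------------
  have hs2 : sqm (w ^ 2 + Complex.I * γ) ^ 2 = w ^ 2 + Complex.I * γ := sqm_sq _
  obtain ⟨s, hsdef⟩ : ∃ s, sqm (w ^ 2 + Complex.I * γ) = s := ⟨_, rfl⟩
  rw [hsdef] at hs2
  have hprod : (s - w) * (s + w) = Complex.I * γ := by linear_combination hs2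
  have hIγ : Complex.I * (γ:ℂ) ≠ 0 :=
    mul_ne_zero Complex.I_ne_zero (by exact_mod_cast hγ.ne')
  have hsm : s - w ≠ 0 := fun h => hIγ (by rw [← hprod, h, zero_mul])
  have hsp : s + w ≠ 0 := fun h => hIγ (by rw [← hprod, h, mul_zero])
  have habs : ‖s - w‖ * ‖s + w‖ = γ := by
    rw [← norm_mul, hprod]; simp [abs_of_pos hγ]
  have hH : hfun γ w = (s - w) / (s + w) := by rw [hfun, hsdef]
  have hm0 : 0 < ‖s - w‖ := by simpa using hsm
  have hp0 : 0 < ‖s + w‖ := by simpa using hsp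
  have hHabs : ‖hfun γ w‖ = ‖s - w‖ ^ 2 / γ := by
    rw [hH, norm_div, div_eq_div_iff hp0.ne' hγ.ne']
    linear_combination (-(‖s - w‖)) * habs
  have hH0 : 0 < ‖hfun γ w‖ := by
    rw [hHabs]; positivity
  have hsabs : ‖s‖ ^ 2 ≤ ‖w‖ ^ 2 + γ := by
    calc ‖s‖ ^ 2 = ‖s ^ 2‖ := by rw [norm_pow]
      _ = ‖w ^ 2 + Complex.I * γ‖ := by rw [hs2]
      _ ≤ ‖w ^ 2‖ + ‖Complex.I * γ‖ := norm_add_le _ _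
      _ = ‖w‖ ^ 2 + γ := by
          simp [abs_of_pos hγ]
  have hswub : ‖s - w‖ ^ 2 ≤ 4 * ‖w‖ ^ 2 + 2 * γ := by
    have h1 : ‖s - w‖ ≤ ‖s‖ + ‖w‖ := by
      simpa [sub_eq_add_neg] using norm_add_le s (-w)
    have h2 : ‖s - w‖ ^ 2 ≤ (‖s‖ + ‖w‖) ^ 2 :=
      pow_le_pow_left₀ (norm_nonneg _) h1 2
    exact aux_sw _ _ _ _ h2 hsabs
  ------------------------------------------------------------------
  -- Part 3: the fixed-point equations
  ------------------------------------------------------------------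
  obtain ⟨a, hadef⟩ : ∃ x, Afun γ w = x := ⟨_, rfl⟩
  obtain ⟨b, hbdef⟩ : ∃ x, Bfun γ j w = x := ⟨_, rfl⟩
  have h2R : (2 * (R:ℂ)) ≠ 0 := by
    simp only [ne_eq, mul_eq_zero, OfNat.ofNat_ne_zero, Complex.ofReal_eq_zero, false_or]
    exact hR0.ne'
  have key : w * (2 * (R:ℂ)) = -((b : ℝ):ℂ) + Complex.I * ((a : ℝ):ℂ) := by
    conv_lhs => rw [hfix]
    rw [Gfun, div_mul_cancel₀ _ h2R, hadef, hbdef]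
  have hre : w.re * (2 * R) = -b := by
    have := congrArg Complex.re key
    simpa using this
  have him : w.im * (2 * R) = a := by
    have := congrArg Complex.im key
    simpa using this
  have habw : (‖w‖ ^ 2) * (4 * R ^ 2) = a ^ 2 + b ^ 2 := by
    have h1 : ‖w‖ ^ 2 = w.re ^ 2 + w.im ^ 2 := by
      rw [Complex.sq_norm, Complex.normSq_apply]; ring
    have f1 : (w.re * (2*R))^2 = (-b)^2 := by rw [hre]
    have f2 : (w.im * (2*R))^2 = a^2 := by rw [him]
    linear_combination (4*R^2) * h1 + f1 + f2
  -- membership facts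
  obtain ⟨⟨hre0, him0, h2im⟩, habA⟩ := hw
  rw [hadef, hbdef] at habA
  have ha0 : 0 ≤ a := him ▸ mul_nonneg him0 (by linarith)
  have hb2a : 2 * a ≤ b :=
    le_trans (mul_le_mul_of_nonneg_left (le_abs_self a) (by norm_num)) habA
  have hb0 : 0 ≤ b := le_trans (by positivity) habA
  -- bound on b
  have hb_ub : b ≤ Real.pi + X / (16 * L) := by
    rw [← hbdef, Bfun]
    have := argm_le_pi (hfun γ w)
    linarith [hj_ub]
  have hb_ub' : b ≤ 4 + X / 16 := by
    have hd : X / (16 * L) ≤ X / 16 :=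
      div_le_div_of_nonneg_left hX0.le (by norm_num) (by linarith)
    linarith [hπ4]
  ------------------------------------------------------------------
  -- Part 4: the bound  a·b ≤ γR²
  ------------------------------------------------------------------
  have hsum_ab : a^2 + b^2 ≤ X^2 - 2*X :=
    aux_sum_ab X a b hX4096 ha0 hb2a hb0 hb_ub'
  have hHX : ‖hfun γ w‖ ≤ X := by
    have hhg : ‖hfun γ w‖ * γ = ‖s - w‖ ^ 2 := by
      rw [hHabs]; field_simp
    exact aux_HX _ _ _ γ R a b X hγ hR0 hhg hswub habw hsum_ab hXdef
  have ha_ub : a ≤ 4 * L := by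
    have h1 : a ≤ Real.log X := by
      rw [← hadef, Afun]
      exact Real.log_le_log hH0 hHX
    linarith [hlogX4L]
  have hab_final : a * b ≤ X :=
    aux_ab a b L Q X Real.pi hπ hπ4 hL0 ha_ub hb0 hb_ub hLQ hQ64 hQ
  ------------------------------------------------------------------
  -- Part 5: conclusion
  ------------------------------------------------------------------
  have him2 : (w ^ 2).im = 2 * w.re * w.im := by
    rw [sq, Complex.mul_im]; ring
  have g_le0 : (w ^ 2).im ≤ 0 := by
    rw [him2]
    have := mul_nonpos_of_nonpos_of_nonneg hre0 him0
    linarith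
  have g_lb : -γ / 2 ≤ (w ^ 2).im := by
    rw [him2]
    have hmul : (w.re * (2*R)) * (w.im * (2*R)) = (-b) * a := by rw [hre, him]
    exact aux_lb _ _ _ _ γ R X hR0 hmul hab_final hXdef
  have haddim : (w ^ 2 + Complex.I * γ).im = (w ^ 2).im + γ := by simp
  refine ⟨⟨g_lb, g_le0⟩, ⟨?_, ?_⟩, ?_⟩ <;> rw [haddim] <;> linarith
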